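/- Let Ω ⊂ ℝ² be a bounded measurable set with |Ω| > 0, and let γ_AA, γ_BB > 0 and γ_AB satisfy -√(γ_AA γ_BB) < γ_AB < √(γ_AA γ_BB). Then for all nonnegative measurable functions f_A, f_B on Ω with ∫_Ω f_A = ∫_Ω f_B = 1/2, the energy E[f_A,f_B] = ∫_Ω ( (γ_AA/2) f_A² + γ_AB f_A f_B + (γ_BB/2) f_B² ) dx satisfies E[f_A,f_B] ≥ (γ_AA + 2γ_AB + γ_BB)/(8|Ω|), with equality for the constant functions f_A = f_B = 1/(2|Ω|). -/

import Mathlib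

open MeasureTheory

lemma aux_mul_integrable {α : Type*} [MeasurableSpace α] {μ : Measure α}
    {f g : α → ℝ} (hf : MemLp f 2 μ) (hg : MemLp g 2 μ) :
    Integrable (fun x => f x * g x) μ := by
  have h := (((hf.add hg).integrable_sq).sub hf.integrable_sq).sub hg.integrable_sq
  have heq : (fun x => f x * g x) = fun x => (((f + g) x) ^ 2 - f x ^ 2 - g x ^ 2) / 2 := by
    funext x; simp only [Pi.add_apply]; ring
  rw [heq]
  exact h.div_const 2

/-- Minimization of the simplified segregation energy when
`-√(γAA γBB) < γAB < √(γAA γBB)`: the homogeneous state is optimal. -/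
theorem stmt_0 (Ω : Set (EuclideanSpace ℝ (Fin 2)))
    (hΩm : MeasurableSet Ω) (hΩb : Bornology.IsBounded Ω)
    (hΩpos : 0 < volume Ω)
    (γAA γBB γAB : ℝ) (hAA : 0 < γAA) (hBB : 0 < γBB)
    (hlo : -Real.sqrt (γAA * γBB) < γAB) (hhi : γAB < Real.sqrt (γAA * γBB)) :
    (∀ fA fB : EuclideanSpace ℝ (Fin 2) → ℝ,
      MemLp fA 2 (volume.restrict Ω) → MemLp fB 2 (volume.restrict Ω) →
      (∀ x ∈ Ω, 0 ≤ fA x) → (∀ x ∈ Ω, 0 ≤ fB x) →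
      (∫ x in Ω, fA x) = 1/2 → (∫ x in Ω, fB x) = 1/2 →
      (γAA + 2*γAB + γBB) / (8 * (volume Ω).toReal) ≤
        ∫ x in Ω, (γAA/2 * fA x ^ 2 + γAB * fA x * fB x + γBB/2 * fB x ^ 2)) ∧
    (∫ _x in Ω,
        (γAA/2 * (1/(2*(volume Ω).toReal)) ^ 2
          + γAB * (1/(2*(volume Ω).toReal)) * (1/(2*(volume Ω).toReal))
          + γBB/2 * (1/(2*(volume Ω).toReal)) ^ 2))
      = (γAA + 2*γAB + γBB) / (8 * (volume Ω).toReal) := by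
  have hfin : volume Ω < ⊤ := hΩb.measure_lt_top
  haveI : Fact (volume Ω < ⊤) := ⟨hfin⟩
  set V : ℝ := (volume Ω).toReal with hVdef
  have hV : 0 < V := ENNReal.toReal_pos hΩpos.ne' hfin.ne
  set c : ℝ := 1 / (2 * V) with hcdef
  -- positive semidefiniteness
  have hdisc : γAB ^ 2 < γAA * γBB := by
    have h1 : |γAB| < Real.sqrt (γAA * γBB) := abs_lt.2 ⟨hlo, hhi⟩
    have h2 : Real.sqrt (γAA * γBB) ^ 2 = γAA * γBB :=
      Real.sq_sqrt (by positivity)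
    nlinarith [abs_nonneg γAB, sq_abs γAB, Real.sqrt_nonneg (γAA * γBB)]
  have hQnn : ∀ u v : ℝ, 0 ≤ γAA/2 * u ^ 2 + γAB * u * v + γBB/2 * v ^ 2 := by
    intro u v
    nlinarith [sq_nonneg (γAA * u + γAB * v), sq_nonneg v, mul_nonneg hAA.le (sq_nonneg v)]
  constructor
  · intro fA fB hfA hfB _hAnn _hBnn hmA hmB
    set μ := volume.restrict Ω with hμ
    have hcA : MemLp (fun x => fA x - c) 2 μ := hfA.sub (memLp_const c)
    have hcB : MemLp (fun x => fB x - c) 2 μ := hfB.sub (memLp_const c)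
    have hIA : Integrable fA μ := hfA.integrable one_le_two
    have hIB : Integrable fB μ := hfB.integrable one_le_two
    -- integrability of the shifted quadratic form
    have hIh : Integrable (fun x =>
        γAA/2 * (fA x - c) ^ 2 + γAB * (fA x - c) * (fB x - c)
          + γBB/2 * (fB x - c) ^ 2) μ := by
      have h1 := hcA.integrable_sq.const_mul (γAA/2)
      have h2 := (aux_mul_integrable hcA hcB).const_mul γAB
      have h3 := hcB.integrable_sq.const_mul (γBB/2)
      exact ((h1.add h2).add h3).congr
        (Filter.Eventually.of_forall fun x => by simp only [Pi.add_apply]; ring)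
    -- integrability of the linear part
    have hIL : Integrable (fun x =>
        (γAA + γAB) * c * fA x + (γAB + γBB) * c * fB x
          - (γAA/2 + γAB + γBB/2) * c ^ 2) μ :=
      ((hIA.const_mul _).add (hIB.const_mul _)).sub (integrable_const _)
    -- pointwise decomposition
    have hdecomp : (fun x => γAA/2 * fA x ^ 2 + γAB * fA x * fB x + γBB/2 * fB x ^ 2)
        = fun x =>
          (γAA/2 * (fA x - c) ^ 2 + γAB * (fA x - c) * (fB x - c)
            + γBB/2 * (fB x - c) ^ 2)
          + ((γAA + γAB) * c * fA x + (γAB + γBB) * c * fB x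
            - (γAA/2 + γAB + γBB/2) * c ^ 2) := by
      funext x; ring
    rw [show (∫ x in Ω, (γAA/2 * fA x ^ 2 + γAB * fA x * fB x + γBB/2 * fB x ^ 2))
        = ∫ x, (γAA/2 * fA x ^ 2 + γAB * fA x * fB x + γBB/2 * fB x ^ 2) ∂μ from rfl,
      hdecomp, integral_add hIh hIL]
    have hIntL : (∫ x, ((γAA + γAB) * c * fA x + (γAB + γBB) * c * fB x
        - (γAA/2 + γAB + γBB/2) * c ^ 2) ∂μ)
        = (γAA + γAB) * c * (1/2) + (γAB + γBB) * c * (1/2)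
          - (γAA/2 + γAB + γBB/2) * c ^ 2 * V := by
      have hI1 : Integrable (fun x => (γAA + γAB) * c * fA x) μ := hIA.const_mul _
      have hI2 : Integrable (fun x => (γAB + γBB) * c * fB x) μ := hIB.const_mul _
      have hI12 : Integrable (fun x => (γAA + γAB) * c * fA x + (γAB + γBB) * c * fB x) μ :=
        hI1.add hI2
      rw [integral_sub hI12 (integrable_const _), integral_add hI1 hI2,
        integral_const_mul, integral_const_mul, integral_const]
      have hμuniv : μ Set.univ = volume Ω := by
        rw [hμ, Measure.restrict_apply_univ]
      rw [hμ] at hmA hmB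
      rw [hmA, hmB, measureReal_def, hμuniv, smul_eq_mul, ← hVdef]
      ring
    rw [hIntL]
    have hnn : 0 ≤ ∫ x, (γAA/2 * (fA x - c) ^ 2 + γAB * (fA x - c) * (fB x - c)
        + γBB/2 * (fB x - c) ^ 2) ∂μ :=
      integral_nonneg fun x => hQnn _ _
    have harith : (γAA + 2*γAB + γBB) / (8 * V)
        = (γAA + γAB) * c * (1/2) + (γAB + γBB) * c * (1/2)
          - (γAA/2 + γAB + γBB/2) * c ^ 2 * V := by
      rw [hcdef]; field_simp; ring
    rw [harith]
    linarith
  · rw [setIntegral_const, smul_eq_mul]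
    rw [show volume.real Ω = V from rfl, hcdef]
    field_simp
    ring
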